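/- Let u > 0 and let w be a real number with w ≤ -1 satisfying w·e^w = -e^{-u-1} (i.e., w = W_{-1}(-e^{-u-1}), the lower real branch of the Lambert W function). Then -1 - √(2u) - u < w < -1 - √(2u) - (2/3)·u. -/

import Mathlib

open Real

private lemma aux_quad_lt_exp {s : ℝ} (hs : 0 < s) : 1 + s + s ^ 2 / 2 < Real.exp s := by
  have key : StrictMonoOn (fun x : ℝ => Real.exp x - 1 - x - x ^ 2 / 2) (Set.Ici 0) := by
    apply strictMonoOn_of_deriv_pos (convex_Ici 0)
    · fun_prop
    · intro x hx
      rw [interior_Ici] at hx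
      have hd : HasDerivAt (fun x : ℝ => Real.exp x - 1 - x - x ^ 2 / 2)
          (Real.exp x - 0 - 1 - 2 * x ^ 1 / 2) x := by
        exact (((Real.hasDerivAt_exp x).sub (hasDerivAt_const x 1)).sub
          (hasDerivAt_id x)).sub ((hasDerivAt_pow 2 x).div_const 2)
      rw [hd.deriv]
      have := Real.add_one_lt_exp (ne_of_gt hx)
      simp only [pow_one]
      linarith
  have h := key Set.self_mem_Ici (Set.mem_Ici.2 hs.le) hs
  simp only [Real.exp_zero] at h
  norm_num at h
  linarith

private lemma aux_H_gt_one {s : ℝ} (hs : 0 < s) :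
    1 < (1 + s + s ^ 2 / 3) * Real.exp (s ^ 2 / 6 - s) := by
  set H : ℝ → ℝ := fun x => (1 + x + x ^ 2 / 3) * Real.exp (x ^ 2 / 6 - x) with hH
  have key : StrictMonoOn H (Set.Ici 0) := by
    apply strictMonoOn_of_deriv_pos (convex_Ici 0)
    · fun_prop
    · intro x hx
      rw [interior_Ici] at hx
      have hd1 : HasDerivAt (fun x : ℝ => 1 + x + x ^ 2 / 3) (0 + 1 + 2 * x ^ 1 / 3) x :=
        ((hasDerivAt_const x 1).add (hasDerivAt_id x)).add ((hasDerivAt_pow 2 x).div_const 3)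
      have hd2 : HasDerivAt (fun x : ℝ => Real.exp (x ^ 2 / 6 - x))
          (Real.exp (x ^ 2 / 6 - x) * (2 * x ^ 1 / 6 - 1)) x := by
        exact (((hasDerivAt_pow 2 x).div_const 6).sub (hasDerivAt_id x)).exp
      have hd : HasDerivAt H ((0 + 1 + 2 * x ^ 1 / 3) * Real.exp (x ^ 2 / 6 - x)
          + (1 + x + x ^ 2 / 3) * (Real.exp (x ^ 2 / 6 - x) * (2 * x ^ 1 / 6 - 1))) x :=
        hd1.mul hd2
      rw [hd.deriv]
      have hpos : 0 < Real.exp (x ^ 2 / 6 - x) := Real.exp_pos _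
      have : (0 + 1 + 2 * x ^ 1 / 3) * Real.exp (x ^ 2 / 6 - x)
          + (1 + x + x ^ 2 / 3) * (Real.exp (x ^ 2 / 6 - x) * (2 * x ^ 1 / 6 - 1))
          = x ^ 3 / 9 * Real.exp (x ^ 2 / 6 - x) := by ring
      rw [this]
      have hx' : (0:ℝ) < x := hx
      positivity
  have h := key Set.self_mem_Ici (Set.mem_Ici.2 hs.le) hs
  simp only [hH] at h
  norm_num at h
  convert h using 2 <;> ring

private lemma aux_F_anti : StrictAntiOn (fun x : ℝ => (1 + x) * Real.exp (-x)) (Set.Ici 0) := by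
  apply strictAntiOn_of_deriv_neg (convex_Ici 0)
  · fun_prop
  · intro x hx
    rw [interior_Ici] at hx
    have hd : HasDerivAt (fun x : ℝ => (1 + x) * Real.exp (-x))
        ((0 + 1) * Real.exp (-x) + (1 + x) * (Real.exp (-x) * (-1))) x :=
      (((hasDerivAt_const x 1).add (hasDerivAt_id x)).mul (hasDerivAt_id x).neg.exp)
    rw [hd.deriv]
    have hpos : 0 < Real.exp (-x) := Real.exp_pos _
    have hx' : (0:ℝ) < x := hx
    nlinarith [mul_pos hx' hpos]

theorem lambert_Wm1_bounds (u w : ℝ) (hu : 0 < u) (hw : w ≤ -1)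
    (hWw : w * Real.exp w = -Real.exp (-u - 1)) :
    -1 - Real.sqrt (2 * u) - u < w ∧ w < -1 - Real.sqrt (2 * u) - 2 / 3 * u := by
  set s := Real.sqrt (2 * u) with hsdef
  have hs : 0 < s := Real.sqrt_pos.2 (by linarith)
  have hs2 : s ^ 2 = 2 * u := Real.sq_sqrt (by linarith)
  set t := -1 - w with htdef
  have ht : 0 ≤ t := by simp [htdef]; linarith
  have hwt : w = -1 - t := by ring
  have hF : (1 + t) * Real.exp (-t) = Real.exp (-u) := by
    have h1 : Real.exp (-1 - t) = Real.exp (-1) * Real.exp (-t) := by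
      rw [← Real.exp_add]; ring_nf
    have h2 : Real.exp (-u - 1) = Real.exp (-1) * Real.exp (-u) := by
      rw [← Real.exp_add]; ring_nf
    rw [hwt, h1, h2] at hWw
    have he : Real.exp (-1) ≠ 0 := Real.exp_ne_zero _
    have : Real.exp (-1) * ((-1 - t) * Real.exp (-t)) = Real.exp (-1) * (-Real.exp (-u)) := by
      linarith [hWw]
    have h3 := mul_left_cancel₀ he this
    nlinarith [h3]
  constructor
  · -- t < s + u
    have hkey : (1 + (s + u)) * Real.exp (-(s + u)) < (1 + t) * Real.exp (-t) := by
      rw [hF]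
      have h1 : 1 + s + u < Real.exp s := by
        have := aux_quad_lt_exp hs
        nlinarith [hs2]
      have hexp : Real.exp (-(s + u)) = Real.exp (-u) / Real.exp s := by
        rw [eq_div_iff (Real.exp_ne_zero s), ← Real.exp_add]; ring_nf
      rw [hexp]
      rw [div_eq_mul_inv, ← mul_assoc]
      have hes : 0 < Real.exp s := Real.exp_pos s
      have heu : 0 < Real.exp (-u) := Real.exp_pos _
      calc (1 + (s + u)) * Real.exp (-u) * (Real.exp s)⁻¹
          < Real.exp s * Real.exp (-u) * (Real.exp s)⁻¹ := by
            apply mul_lt_mul_of_pos_right _ (inv_pos.2 hes)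
            exact mul_lt_mul_of_pos_right (by linarith) heu
        _ = Real.exp (-u) := by field_simp
    have := (aux_F_anti.lt_iff_gt (Set.mem_Ici.2 (by positivity)) (Set.mem_Ici.2 ht)).1 hkey
    linarith
  · -- s + 2/3 * u < t
    have hkey : (1 + t) * Real.exp (-t) < (1 + (s + 2 / 3 * u)) * Real.exp (-(s + 2 / 3 * u)) := by
      rw [hF]
      have h1 := aux_H_gt_one hs
      have h2 : s ^ 2 / 3 = 2 / 3 * u := by rw [hs2]; ring
      have h3 : s ^ 2 / 6 - s = -(s + 2 / 3 * u) - (-u) := by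
        have : s ^ 2 = 2 * u := hs2
        nlinarith [this]
      rw [h3, h2] at h1
      have heu : 0 < Real.exp (-u) := Real.exp_pos _
      have : Real.exp (-(s + 2 / 3 * u) - -u) = Real.exp (-(s + 2 / 3 * u)) / Real.exp (-u) := by
        rw [Real.exp_sub]
      rw [this] at h1
      calc Real.exp (-u) = 1 * Real.exp (-u) := by ring
        _ < ((1 + s + 2 / 3 * u) * (Real.exp (-(s + 2 / 3 * u)) / Real.exp (-u))) * Real.exp (-u) := by
            exact mul_lt_mul_of_pos_right h1 heu
        _ = (1 + (s + 2 / 3 * u)) * Real.exp (-(s + 2 / 3 * u)) := by field_simp; ring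
    have := (aux_F_anti.lt_iff_gt (Set.mem_Ici.2 ht) (Set.mem_Ici.2 (by positivity))).1 hkey
    linarith
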